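/- arXiv:2011.10163 — 2 statements merged into one kernel-verified Lean document; each statement's English description precedes it below -/
import Mathlib

section
/- (Ky Fan / PCA optimality) Let S ∈ ℝ^{d×d} be a symmetric matrix with eigenvalues λ_1 ≥ λ_2 ≥ … ≥ λ_d, and let 1 ≤ m ≤ d. Then the maximum of tr(WᵀSW) over all W ∈ ℝ^{d×m} with WᵀW = I_m equals λ_1 + λ_2 + … + λ_m, and it is attained when the columns of W are m orthonormal eigenvectors of S corresponding to the m largest eigenvalues. In particular, for the PCA total scatter matrix S = XHXᵀ (X ∈ ℝ^{d×n}, H the centralisation matrix), the PCA problem max_{WᵀW=I_m} tr(WᵀXHXᵀW) is solved by the top-m eigenvectors of XHXᵀ, with optimal value the sum of its m largest eigenvalues. -/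
open Matrix

/-- The centralisation matrix `H = I - (1/n) N`, where `N` is the all-ones matrix. -/
noncomputable def centMat (n : ℕ) : Matrix (Fin n) (Fin n) ℝ :=
  1 - (1 / (n : ℝ)) • Matrix.of (fun _ _ => (1 : ℝ))

/-- Key combinatorial inequality: if `lam` is antitone, `0 ≤ p i ≤ 1` and `∑ p = m`,
then `∑ lam i * p i` is at most the sum of the `m` largest values of `lam`. -/
lemma kyfan_sum_le (d m : ℕ) (hm1 : 1 ≤ m) (hm : m ≤ d) (lam : Fin d → ℝ)
    (hs : Antitone lam) (p : Fin d → ℝ) (hp0 : ∀ i, 0 ≤ p i) (hp1 : ∀ i, p i ≤ 1)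
    (hps : ∑ i, p i = m) :
    ∑ i, lam i * p i ≤ ∑ i : Fin m, lam (Fin.castLE hm i) := by
  have hmd : m - 1 < d := by omega
  set c := lam ⟨m - 1, hmd⟩ with hc
  have hset : Finset.univ.filter (fun i : Fin d => (i : ℕ) < m)
      = Finset.univ.map ⟨Fin.castLE hm, Fin.castLE_injective hm⟩ := by
    ext i
    simp only [Finset.mem_filter, Finset.mem_univ, true_and, Finset.mem_map,
      Function.Embedding.coeFn_mk]
    constructor
    · intro h; exact ⟨⟨i, h⟩, rfl⟩
    · rintro ⟨j, rfl⟩; exact j.2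
  have hsum_m : ∑ i : Fin m, lam (Fin.castLE hm i)
      = ∑ i ∈ Finset.univ.filter (fun i : Fin d => (i : ℕ) < m), lam i := by
    rw [hset, Finset.sum_map]; rfl
  have key : ∀ i : Fin d, lam i * p i ≤ c * p i + (if (i : ℕ) < m then lam i - c else 0) := by
    intro i
    by_cases h : (i : ℕ) < m
    · simp only [h, if_pos]
      have hle : c ≤ lam i := hs (by simp [Fin.le_def]; omega)
      nlinarith [hp1 i, hp0 i]
    · simp only [h, if_neg, not_false_iff]
      have hle : lam i ≤ c := hs (by simp [Fin.le_def]; omega)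
      nlinarith [hp0 i]
  calc ∑ i, lam i * p i ≤ ∑ i, (c * p i + (if (i : ℕ) < m then lam i - c else 0)) :=
        Finset.sum_le_sum fun i _ => key i
    _ = c * (m : ℝ) + ∑ i ∈ Finset.univ.filter (fun i : Fin d => (i : ℕ) < m), (lam i - c) := by
        rw [Finset.sum_add_distrib, ← Finset.mul_sum, hps, Finset.sum_ite, Finset.sum_const_zero,
          add_zero]
    _ = ∑ i : Fin m, lam (Fin.castLE hm i) := by
        rw [Finset.sum_sub_distrib, Finset.sum_const, hsum_m]
        have hcard : (Finset.univ.filter (fun i : Fin d => (i : ℕ) < m)).card = m := by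
          rw [hset, Finset.card_map, Finset.card_univ, Fintype.card_fin]
        rw [hcard]
        ring

lemma kyfan_trace_diag (d m : ℕ) (lam : Fin d → ℝ) (U : Matrix (Fin d) (Fin m) ℝ) :
    Matrix.trace (Uᵀ * Matrix.diagonal lam * U) = ∑ i, lam i * ∑ j, (U i j) ^ 2 := by
  rw [Matrix.mul_assoc]
  simp only [Matrix.trace, Matrix.diag_apply, Matrix.mul_apply, Matrix.diagonal_apply,
    Matrix.transpose_apply, ite_mul, zero_mul, Finset.sum_ite_eq, Finset.mem_univ, if_true]
  rw [Finset.sum_comm]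
  refine Finset.sum_congr rfl fun i _ => ?_
  rw [Finset.mul_sum]
  exact Finset.sum_congr rfl fun j _ => by ring

lemma kyfan_sum_sq (d m : ℕ) (U : Matrix (Fin d) (Fin m) ℝ) (hU : Uᵀ * U = 1) :
    ∑ i, ∑ j, (U i j) ^ 2 = (m : ℝ) := by
  have h : Matrix.trace (Uᵀ * U) = (m : ℝ) := by rw [hU]; simp
  rw [← h]
  simp only [Matrix.trace, Matrix.diag_apply, Matrix.mul_apply, Matrix.transpose_apply]
  rw [Finset.sum_comm]
  exact Finset.sum_congr rfl fun a _ => Finset.sum_congr rfl fun b _ => by ring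

lemma kyfan_row_le_one (d m : ℕ) (U : Matrix (Fin d) (Fin m) ℝ) (hU : Uᵀ * U = 1) (i : Fin d) :
    ∑ j, (U i j) ^ 2 ≤ 1 := by
  set P := U * Uᵀ with hPdef
  have hPP : P * P = P := by
    rw [hPdef, Matrix.mul_assoc, ← Matrix.mul_assoc Uᵀ, hU, Matrix.one_mul]
  have hPsymm : ∀ a b, P a b = P b a := by
    intro a b
    simp [hPdef, Matrix.mul_apply, Matrix.transpose_apply, mul_comm]
  have hPii : P i i = ∑ j, (U i j) ^ 2 := by
    simp [hPdef, Matrix.mul_apply, Matrix.transpose_apply, sq]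
  have hsq : P i i ^ 2 ≤ P i i := by
    have h1 : (P * P) i i = ∑ j, (P i j) ^ 2 := by
      simp only [Matrix.mul_apply]
      exact Finset.sum_congr rfl fun j _ => by rw [hPsymm j i]; ring
    have h2 : P i i ^ 2 ≤ ∑ j, (P i j) ^ 2 :=
      Finset.single_le_sum (f := fun j => P i j ^ 2) (fun j _ => sq_nonneg _) (Finset.mem_univ i)
    rw [← h1, hPP] at h2; exact h2
  have h0 : 0 ≤ P i i := by rw [hPii]; positivity
  rw [← hPii]; nlinarith

/-- Ky Fan / PCA optimality: for a symmetric `S = V (diag lam) Vᵀ` with `V` orthogonal and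
eigenvalues `lam` in decreasing order, the maximum of `tr(WᵀSW)` over `W` with `WᵀW = I_m`
is the sum of the `m` largest eigenvalues, attained at the first `m` columns of `V`
(i.e. `m` orthonormal eigenvectors for the `m` largest eigenvalues). In particular this
solves the PCA problem for the total scatter matrix `S = XHXᵀ`. -/
theorem ky_fan_pca (d m : ℕ) (hm1 : 1 ≤ m) (hm : m ≤ d)
    (S : Matrix (Fin d) (Fin d) ℝ) (hS : S.IsSymm)
    (lam : Fin d → ℝ) (V : Matrix (Fin d) (Fin d) ℝ)
    (hV : Vᵀ * V = 1) (hdiag : S = V * Matrix.diagonal lam * Vᵀ)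
    (hsorted : Antitone lam) :
    IsGreatest {t : ℝ | ∃ W : Matrix (Fin d) (Fin m) ℝ,
        Wᵀ * W = 1 ∧ t = Matrix.trace (Wᵀ * S * W)}
      (∑ i : Fin m, lam (Fin.castLE hm i)) ∧
    ((V.submatrix id (Fin.castLE hm))ᵀ * V.submatrix id (Fin.castLE hm) = 1 ∧
      Matrix.trace ((V.submatrix id (Fin.castLE hm))ᵀ * S * V.submatrix id (Fin.castLE hm)) =
        ∑ i : Fin m, lam (Fin.castLE hm i)) ∧
    (∀ (n : ℕ) (X : Matrix (Fin d) (Fin n) ℝ), S = X * centMat n * Xᵀ →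
      IsGreatest {t : ℝ | ∃ W : Matrix (Fin d) (Fin m) ℝ,
          Wᵀ * W = 1 ∧ t = Matrix.trace (Wᵀ * (X * centMat n * Xᵀ) * W)}
        (∑ i : Fin m, lam (Fin.castLE hm i))) := by
  have hVVt : V * Vᵀ = 1 := mul_eq_one_comm.mp hV
  -- the maximiser: first m columns of V
  set W₀ := V.submatrix id (Fin.castLE hm) with hW₀def
  have hW₀orth : W₀ᵀ * W₀ = 1 := by
    have h : W₀ᵀ * W₀ = (Vᵀ * V).submatrix (Fin.castLE hm) (Fin.castLE hm) := by
      ext a b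
      simp [hW₀def, Matrix.mul_apply, Matrix.submatrix_apply, Matrix.transpose_apply]
    rw [h, hV]
    ext a b
    simp [Matrix.one_apply, Fin.castLE_inj]
  have hW₀tr : Matrix.trace (W₀ᵀ * S * W₀) = ∑ i : Fin m, lam (Fin.castLE hm i) := by
    have hWV : W₀ᵀ * V = (1 : Matrix (Fin d) (Fin d) ℝ).submatrix (Fin.castLE hm) id := by
      rw [← hV]
      ext a b
      simp [hW₀def, Matrix.mul_apply, Matrix.submatrix_apply, Matrix.transpose_apply]
    have hVW : Vᵀ * W₀ = (1 : Matrix (Fin d) (Fin d) ℝ).submatrix id (Fin.castLE hm) := by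
      rw [← hV]
      ext a b
      simp [hW₀def, Matrix.mul_apply, Matrix.submatrix_apply, Matrix.transpose_apply]
    have key : W₀ᵀ * S * W₀
        = (Matrix.diagonal lam).submatrix (Fin.castLE hm) (Fin.castLE hm) := by
      calc W₀ᵀ * S * W₀ = (W₀ᵀ * V) * Matrix.diagonal lam * (Vᵀ * W₀) := by
            rw [hdiag]; simp only [Matrix.mul_assoc]
        _ = (Matrix.diagonal lam).submatrix (Fin.castLE hm) (Fin.castLE hm) := by
            rw [hWV, hVW]
            ext a b
            simp [Matrix.mul_apply, Matrix.submatrix_apply, Matrix.one_apply, Finset.sum_ite_eq,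
              Finset.sum_ite_eq']
    rw [key]
    simp [Matrix.trace, Matrix.diag_apply, Matrix.submatrix_apply, Matrix.diagonal_apply]
  -- the upper bound
  have hub : ∀ t ∈ {t : ℝ | ∃ W : Matrix (Fin d) (Fin m) ℝ,
      Wᵀ * W = 1 ∧ t = Matrix.trace (Wᵀ * S * W)}, t ≤ ∑ i : Fin m, lam (Fin.castLE hm i) := by
    rintro t ⟨W, hW, rfl⟩
    set U := Vᵀ * W with hUdef
    have hUorth : Uᵀ * U = 1 := by
      rw [hUdef, Matrix.transpose_mul, Matrix.transpose_transpose, Matrix.mul_assoc,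
        ← Matrix.mul_assoc V, hVVt, Matrix.one_mul, hW]
    have htr : Matrix.trace (Wᵀ * S * W) = Matrix.trace (Uᵀ * Matrix.diagonal lam * U) := by
      rw [hdiag, hUdef, Matrix.transpose_mul, Matrix.transpose_transpose]
      simp only [Matrix.mul_assoc]
    rw [htr, kyfan_trace_diag]
    exact kyfan_sum_le d m hm1 hm lam hsorted (fun i => ∑ j, (U i j) ^ 2)
      (fun i => by positivity) (kyfan_row_le_one d m U hUorth) (kyfan_sum_sq d m U hUorth)
  have hmem : (∑ i : Fin m, lam (Fin.castLE hm i)) ∈ {t : ℝ | ∃ W : Matrix (Fin d) (Fin m) ℝ,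
      Wᵀ * W = 1 ∧ t = Matrix.trace (Wᵀ * S * W)} := ⟨W₀, hW₀orth, hW₀tr.symm⟩
  refine ⟨⟨hmem, hub⟩, ⟨hW₀orth, hW₀tr⟩, ?_⟩
  intro n X hX
  rw [← hX]
  exact ⟨hmem, hub⟩
end

section
/- Let X ∈ ℝ^{d×n}, H = I_n - (1/n)·N the centralisation matrix, W ∈ ℝ^{d×m} such that S = WᵀXHXᵀW is positive definite, and let G ∈ ℝ^{n×c} be a cluster-indicator matrix (so GᵀG is invertible). Then the minimum over M ∈ ℝ^{m×c} of ‖S^{-1/2}WᵀXH - MGᵀ‖_F² equals tr(S^{-1}·WᵀXH(I_n - G(GᵀG)^{-1}Gᵀ)HXᵀW), attained at M = S^{-1/2}WᵀXHG(GᵀG)^{-1}. Hence, for fixed W, minimizing the trace ratio tr(S^{-1}·WᵀXH(I_n - G(GᵀG)^{-1}Gᵀ)HXᵀW) over cluster-indicator matrices G is equivalent to the K-means-like problem min_{G,M} ‖S^{-1/2}WᵀXH - MGᵀ‖_F². -/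
open Matrix

/-- The Frobenius norm of a real matrix. -/
noncomputable def frobNorm {d n : ℕ} (A : Matrix (Fin d) (Fin n) ℝ) : ℝ :=
  Real.sqrt (∑ i, ∑ j, |A i j| ^ 2)

/-- The positive semidefinite square root of a positive semidefinite matrix
(the Mathlib definition of December 2024, since removed). -/
noncomputable def Matrix.PosSemidef.sqrt {n : Type*} [Fintype n] [DecidableEq n]
    {A : Matrix n n ℝ} (hA : A.PosSemidef) : Matrix n n ℝ :=
  hA.1.eigenvectorUnitary.1 * diagonal ((↑) ∘ (√·) ∘ hA.1.eigenvalues) *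
    (star hA.1.eigenvectorUnitary : Matrix n n ℝ)

/-- A cluster-indicator matrix: entries in `{0,1}`, each row sums to `1`,
each column is nonzero. -/
def IsClusterIndicator {n c : ℕ} (G : Matrix (Fin n) (Fin c) ℝ) : Prop :=
  (∀ i j, G i j = 0 ∨ G i j = 1) ∧ (∀ i, ∑ j, G i j = 1) ∧ (∀ j, ∃ i, G i j ≠ 0)

section Aux

variable {d n m c : ℕ}

lemma frob_sq (A : Matrix (Fin d) (Fin n) ℝ) :
    frobNorm A ^ 2 = Matrix.trace (A * Aᵀ) := by
  have h0 : (0:ℝ) ≤ ∑ i, ∑ j, |A i j| ^ 2 := by positivity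
  rw [frobNorm, Real.sq_sqrt h0]
  simp [Matrix.trace, Matrix.mul_apply, Matrix.diag, sq_abs, pow_two]

lemma trAAt_nonneg (A : Matrix (Fin d) (Fin n) ℝ) :
    0 ≤ Matrix.trace (A * Aᵀ) := by
  rw [← frob_sq]; positivity

lemma pythag (B C : Matrix (Fin m) (Fin n) ℝ) (h : B * Cᵀ = 0) :
    Matrix.trace ((B + C) * (B + C)ᵀ) =
      Matrix.trace (B * Bᵀ) + Matrix.trace (C * Cᵀ) := by
  have h2 : Matrix.trace (C * Bᵀ) = 0 := by
    have e : (C * Bᵀ) = (B * Cᵀ)ᵀ := by rw [transpose_mul, transpose_transpose]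
    rw [e, Matrix.trace_transpose, h, Matrix.trace_zero]
  have h1 : Matrix.trace (B * Cᵀ) = 0 := by rw [h, Matrix.trace_zero]
  simp only [transpose_add, Matrix.add_mul, Matrix.mul_add, Matrix.trace_add, h1, h2]
  ring

lemma cluster_gram {G : Matrix (Fin n) (Fin c) ℝ} (hG : IsClusterIndicator G) :
    IsUnit (Gᵀ * G).det := by
  obtain ⟨h01, hrow, hcol⟩ := hG
  have hnonneg : ∀ i j, (0:ℝ) ≤ G i j := by
    intro i j; rcases h01 i j with h | h <;> simp [h]
  have hdiag : Gᵀ * G = Matrix.diagonal (fun j => ∑ i, G i j) := by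
    ext a b
    by_cases hab : a = b
    · subst hab
      simp only [Matrix.mul_apply, Matrix.transpose_apply, Matrix.diagonal_apply_eq]
      refine Finset.sum_congr rfl fun i _ => ?_
      rcases h01 i a with h | h <;> simp [h]
    · simp only [Matrix.mul_apply, Matrix.transpose_apply,
        Matrix.diagonal_apply_ne _ hab]
      refine Finset.sum_eq_zero fun i _ => ?_
      by_contra hne
      have ha : G i a = 1 := by
        rcases h01 i a with h | h
        · simp [h] at hne
        · exact h
      have hb : G i b = 1 := by
        rcases h01 i b with h | h
        · simp [h] at hne
        · exact h
      have hsub : ({a, b} : Finset (Fin c)).sum (G i) ≤ ∑ j, G i j :=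
        Finset.sum_le_sum_of_subset_of_nonneg (Finset.subset_univ _)
          (fun j _ _ => hnonneg i j)
      rw [Finset.sum_pair hab, ha, hb, hrow i] at hsub
      linarith
  rw [hdiag, Matrix.det_diagonal]
  refine isUnit_iff_ne_zero.2 (Finset.prod_ne_zero_iff.2 fun j _ => ?_)
  obtain ⟨i, hi⟩ := hcol j
  have h1 : G i j = 1 := by
    rcases h01 i j with h | h
    · exact absurd h hi
    · exact h
  have hle : G i j ≤ ∑ k, G k j :=
    Finset.single_le_sum (fun k _ => hnonneg k j) (Finset.mem_univ i)
  rw [h1] at hle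
  exact ne_of_gt (lt_of_lt_of_le one_pos hle)

lemma centMat_symm : (centMat n)ᵀ = centMat n := by
  unfold centMat
  ext i j
  simp [Matrix.one_apply, eq_comm]

end Aux

lemma psd_sqrt_mul_self {m : ℕ} {A : Matrix (Fin m) (Fin m) ℝ} (hA : A.PosSemidef) :
    hA.sqrt * hA.sqrt = A := by
  have hU : (star hA.1.eigenvectorUnitary : Matrix (Fin m) (Fin m) ℝ) *
      hA.1.eigenvectorUnitary.1 = 1 := Unitary.star_mul_self_of_mem hA.1.eigenvectorUnitary.2
  have hD : diagonal ((↑) ∘ (√·) ∘ hA.1.eigenvalues) * diagonal ((↑) ∘ (√·) ∘ hA.1.eigenvalues)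
      = diagonal (RCLike.ofReal ∘ hA.1.eigenvalues : Fin m → ℝ) := by
    rw [diagonal_mul_diagonal]
    congr 1; funext i
    simp [Real.mul_self_sqrt (hA.eigenvalues_nonneg i)]
  conv_rhs => rw [hA.1.spectral_theorem, Unitary.conjStarAlgAut_apply]
  unfold Matrix.PosSemidef.sqrt
  calc _ = hA.1.eigenvectorUnitary.1 * diagonal ((↑) ∘ (√·) ∘ hA.1.eigenvalues) *
      ((star hA.1.eigenvectorUnitary : Matrix (Fin m) (Fin m) ℝ) * hA.1.eigenvectorUnitary.1) *
      diagonal ((↑) ∘ (√·) ∘ hA.1.eigenvalues) *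
      (star hA.1.eigenvectorUnitary : Matrix (Fin m) (Fin m) ℝ) := by
        simp only [Matrix.mul_assoc]
    _ = _ := by
      rw [hU, Matrix.mul_one, Matrix.mul_assoc _ (diagonal _) (diagonal _), hD]

lemma psd_sqrt_transpose {m : ℕ} {A : Matrix (Fin m) (Fin m) ℝ} (hA : A.PosSemidef) :
    (hA.sqrt)ᵀ = hA.sqrt := by
  unfold Matrix.PosSemidef.sqrt
  rw [transpose_mul, transpose_mul, diagonal_transpose, Matrix.mul_assoc]
  have h1 : ((star hA.1.eigenvectorUnitary : Matrix (Fin m) (Fin m) ℝ))ᵀ =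
      hA.1.eigenvectorUnitary.1 := by
    rw [star_eq_conjTranspose, conjTranspose_eq_transpose_of_trivial,
      transpose_transpose]
  have h2 : (hA.1.eigenvectorUnitary.1)ᵀ =
      (star hA.1.eigenvectorUnitary : Matrix (Fin m) (Fin m) ℝ) := by
    rw [star_eq_conjTranspose, conjTranspose_eq_transpose_of_trivial]
  rw [h1, h2]


/-- For fixed `W` with `S = WᵀXHXᵀW` positive definite, the minimum over `M` of
`‖S^{-1/2}WᵀXH - MGᵀ‖_F²` equals `tr(S⁻¹·WᵀXH(I - G(GᵀG)⁻¹Gᵀ)HXᵀW)`, attained at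
`M = S^{-1/2}WᵀXHG(GᵀG)⁻¹`; hence minimizing this trace over cluster-indicator
matrices `G` is equivalent to the K-means-like problem. -/
theorem trace_ratio_kmeans_like (d n m c : ℕ) (hn : 1 ≤ n)
    (X : Matrix (Fin d) (Fin n) ℝ) (W : Matrix (Fin d) (Fin m) ℝ)
    (hS : (Wᵀ * X * centMat n * Xᵀ * W).PosDef) :
    (∀ G : Matrix (Fin n) (Fin c) ℝ, IsClusterIndicator G →
      IsUnit (Gᵀ * G).det ∧
      IsLeast {v : ℝ | ∃ M : Matrix (Fin m) (Fin c) ℝ,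
          v = frobNorm ((hS.posSemidef.sqrt)⁻¹ * (Wᵀ * X * centMat n) - M * Gᵀ) ^ 2}
        (Matrix.trace ((Wᵀ * X * centMat n * Xᵀ * W)⁻¹ *
          (Wᵀ * X * centMat n * (1 - G * (Gᵀ * G)⁻¹ * Gᵀ) * centMat n * Xᵀ * W))) ∧
      frobNorm ((hS.posSemidef.sqrt)⁻¹ * (Wᵀ * X * centMat n) -
          ((hS.posSemidef.sqrt)⁻¹ * (Wᵀ * X * centMat n) * G * (Gᵀ * G)⁻¹) * Gᵀ) ^ 2 =
        Matrix.trace ((Wᵀ * X * centMat n * Xᵀ * W)⁻¹ *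
          (Wᵀ * X * centMat n * (1 - G * (Gᵀ * G)⁻¹ * Gᵀ) * centMat n * Xᵀ * W))) ∧
    {v : ℝ | ∃ G : Matrix (Fin n) (Fin c) ℝ, IsClusterIndicator G ∧
        v = Matrix.trace ((Wᵀ * X * centMat n * Xᵀ * W)⁻¹ *
          (Wᵀ * X * centMat n * (1 - G * (Gᵀ * G)⁻¹ * Gᵀ) * centMat n * Xᵀ * W))} =
    {v : ℝ | ∃ (G : Matrix (Fin n) (Fin c) ℝ) (M : Matrix (Fin m) (Fin c) ℝ),
        IsClusterIndicator G ∧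
        v = frobNorm ((hS.posSemidef.sqrt)⁻¹ * (Wᵀ * X * centMat n) - M * Gᵀ) ^ 2 ∧
        ∀ M' : Matrix (Fin m) (Fin c) ℝ,
          frobNorm ((hS.posSemidef.sqrt)⁻¹ * (Wᵀ * X * centMat n) - M * Gᵀ) ^ 2 ≤
            frobNorm ((hS.posSemidef.sqrt)⁻¹ * (Wᵀ * X * centMat n) - M' * Gᵀ) ^ 2} := by
  set H : Matrix (Fin n) (Fin n) ℝ := centMat n with hH
  set Q : Matrix (Fin m) (Fin m) ℝ := (hS.posSemidef.sqrt)⁻¹ with hQ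
  set B : Matrix (Fin m) (Fin n) ℝ := Wᵀ * X * H with hB
  set A : Matrix (Fin m) (Fin n) ℝ := Q * B with hA
  have hsq : hS.posSemidef.sqrt * hS.posSemidef.sqrt = Wᵀ * X * H * Xᵀ * W :=
    psd_sqrt_mul_self hS.posSemidef
  have hsqT : (hS.posSemidef.sqrt)ᵀ = hS.posSemidef.sqrt := by
    exact psd_sqrt_transpose hS.posSemidef
  have hQT : Qᵀ = Q := by
    rw [hQ, Matrix.transpose_nonsing_inv, hsqT]
  have hQQ : Q * Q = (Wᵀ * X * H * Xᵀ * W)⁻¹ := by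
    rw [hQ, ← Matrix.mul_inv_rev, hsq]
  have hBT : Bᵀ = H * Xᵀ * W := by
    rw [hB, hH]
    simp [Matrix.transpose_mul, centMat_symm, Matrix.mul_assoc]
  -- the main per-G statement
  have main : ∀ G : Matrix (Fin n) (Fin c) ℝ, IsClusterIndicator G →
      IsUnit (Gᵀ * G).det ∧
      IsLeast {v : ℝ | ∃ M : Matrix (Fin m) (Fin c) ℝ,
          v = frobNorm (A - M * Gᵀ) ^ 2}
        (Matrix.trace ((Wᵀ * X * H * Xᵀ * W)⁻¹ *
          (Wᵀ * X * H * (1 - G * (Gᵀ * G)⁻¹ * Gᵀ) * H * Xᵀ * W))) ∧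
      frobNorm (A - (A * G * (Gᵀ * G)⁻¹) * Gᵀ) ^ 2 =
        Matrix.trace ((Wᵀ * X * H * Xᵀ * W)⁻¹ *
          (Wᵀ * X * H * (1 - G * (Gᵀ * G)⁻¹ * Gᵀ) * H * Xᵀ * W)) := by
    intro G hG
    have hdet : IsUnit (Gᵀ * G).det := cluster_gram hG
    set P : Matrix (Fin n) (Fin n) ℝ := G * (Gᵀ * G)⁻¹ * Gᵀ with hP
    have hinv : (Gᵀ * G)⁻¹ * (Gᵀ * G) = 1 := Matrix.nonsing_inv_mul _ hdet
    have hP' : P = G * ((Gᵀ * G)⁻¹ * Gᵀ) := by rw [hP, Matrix.mul_assoc]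
    have hPG : P * G = G := by
      rw [hP']
      simp only [Matrix.mul_assoc]
      rw [hinv, Matrix.mul_one]
    have hPT : Pᵀ = P := by
      rw [hP, Matrix.transpose_mul, Matrix.transpose_mul, Matrix.transpose_transpose,
        Matrix.transpose_nonsing_inv, Matrix.transpose_mul, Matrix.transpose_transpose,
        Matrix.mul_assoc]
    have hPP : P * P = P := by
      nth_rewrite 2 [hP']
      rw [← Matrix.mul_assoc, hPG, ← hP']
    have h1P : (1 - P) * P = 0 := by
      rw [Matrix.sub_mul, Matrix.one_mul, hPP, sub_self]
    have h1G : (1 - P) * G = 0 := by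
      rw [Matrix.sub_mul, Matrix.one_mul, hPG, sub_self]
    have h1T : (1 - P)ᵀ = 1 - P := by
      rw [Matrix.transpose_sub, Matrix.transpose_one, hPT]
    have h11 : (1 - P) * (1 - P) = 1 - P := by
      rw [Matrix.mul_sub, Matrix.mul_one, h1P, sub_zero]
    set R : Matrix (Fin m) (Fin n) ℝ := A * (1 - P) with hR
    -- value of the trace target in terms of R
    have htarget : Matrix.trace (R * Rᵀ) =
        Matrix.trace ((Wᵀ * X * H * Xᵀ * W)⁻¹ *
          (Wᵀ * X * H * (1 - G * (Gᵀ * G)⁻¹ * Gᵀ) * H * Xᵀ * W)) := by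
      have e1 : R * Rᵀ = A * ((1 - P) * Aᵀ) := by
        rw [hR, Matrix.transpose_mul, h1T, Matrix.mul_assoc, ← Matrix.mul_assoc (1 - P),
          h11]
      have e2 : Wᵀ * X * H * (1 - G * (Gᵀ * G)⁻¹ * Gᵀ) * H * Xᵀ * W
          = B * ((1 - P) * Bᵀ) := by
        rw [hBT, ← hP, hB]
        simp only [Matrix.mul_assoc]
      rw [e1, e2, hA, Matrix.mul_assoc Q B, Matrix.transpose_mul, hQT]
      rw [show B * ((1 - P) * (Bᵀ * Q)) = (B * ((1 - P) * Bᵀ)) * Q by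
        simp only [Matrix.mul_assoc]]
      rw [← Matrix.mul_assoc, Matrix.trace_mul_comm, ← Matrix.mul_assoc, hQQ]
    -- decomposition for arbitrary M
    have hdecomp : ∀ M : Matrix (Fin m) (Fin c) ℝ,
        frobNorm (A - M * Gᵀ) ^ 2 =
          Matrix.trace (R * Rᵀ) +
          Matrix.trace ((A * P - M * Gᵀ) * (A * P - M * Gᵀ)ᵀ) := by
      intro M
      have hsplit : A - M * Gᵀ = R + (A * P - M * Gᵀ) := by
        rw [hR, Matrix.mul_sub, Matrix.mul_one]; abel
      have hcross : R * (A * P - M * Gᵀ)ᵀ = 0 := by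
        have hT : (A * P - M * Gᵀ)ᵀ = P * Aᵀ - G * Mᵀ := by
          rw [Matrix.transpose_sub, Matrix.transpose_mul A P, hPT,
            Matrix.transpose_mul M Gᵀ, Matrix.transpose_transpose]
        have e1 : (1 - P) * (P * Aᵀ) = 0 := by
          rw [← Matrix.mul_assoc, h1P, Matrix.zero_mul]
        have e2 : (1 - P) * (G * Mᵀ) = 0 := by
          rw [← Matrix.mul_assoc, h1G, Matrix.zero_mul]
        rw [hT, hR, Matrix.mul_assoc, Matrix.mul_sub, e1, e2, sub_zero,
          Matrix.mul_zero]
      rw [frob_sq, hsplit, pythag _ _ hcross]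
    refine ⟨hdet, ⟨⟨A * G * (Gᵀ * G)⁻¹, ?_⟩, ?_⟩, ?_⟩
    · -- membership: optimal M attains the trace
      have hopt : A - (A * G * (Gᵀ * G)⁻¹) * Gᵀ = R := by
        rw [hR, Matrix.mul_sub, Matrix.mul_one, hP]
        simp only [Matrix.mul_assoc]
      rw [hopt, frob_sq, htarget]
    · -- lower bound
      rintro v ⟨M, rfl⟩
      rw [hdecomp M, ← htarget]
      have := trAAt_nonneg (A * P - M * Gᵀ)
      linarith
    · -- value at the optimum
      have hopt : A - (A * G * (Gᵀ * G)⁻¹) * Gᵀ = R := by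
        rw [hR, Matrix.mul_sub, Matrix.mul_one, hP]
        simp only [Matrix.mul_assoc]
      rw [hopt, frob_sq, htarget]
  refine ⟨main, ?_⟩
  ext v
  simp only [Set.mem_setOf_eq]
  constructor
  · rintro ⟨G, hG, rfl⟩
    obtain ⟨hdet, hleast, hval⟩ := main G hG
    refine ⟨G, A * G * (Gᵀ * G)⁻¹, hG, hval.symm, fun M' => ?_⟩
    rw [hval]
    exact hleast.2 ⟨M', rfl⟩
  · rintro ⟨G, M, hG, rfl, hmin⟩
    obtain ⟨hdet, hleast, hval⟩ := main G hG
    refine ⟨G, hG, le_antisymm ?_ (hleast.2 ⟨M, rfl⟩)⟩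
    obtain ⟨M'', hM''⟩ := hleast.1
    calc frobNorm (A - M * Gᵀ) ^ 2 ≤ frobNorm (A - M'' * Gᵀ) ^ 2 := hmin M''
      _ = _ := hM''.symm
end
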